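/- Define φ(x) = [(-40/46)∫₀ˣ(1-t)(1+t)⁴dt + 8∫₀ˣ(1-t)(1+t)²dt] / [(-40/46)(1+x)⁴ + 8(1+x)²] for x ∈ [0,2]. Then the denominator is strictly positive on [0,2], φ(0) = 0, φ(2) = 0, φ'(0) = 1, φ'(2) = -1, and φ(x) > 0 on (0,2). -/

import Mathlib

private lemma antider4 (t : ℝ) :
    HasDerivAt (fun y : ℝ => y + 3/2*y^2 + 2/3*y^3 - 1/2*y^4 - 3/5*y^5 - 1/6*y^6)
      ((1 - t) * (1 + t) ^ 4) t := by
  have h : HasDerivAt (fun y : ℝ => y + 3/2*y^2 + 2/3*y^3 - 1/2*y^4 - 3/5*y^5 - 1/6*y^6)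
      (1 + 3/2*(2*t^1) + 2/3*(3*t^2) - 1/2*(4*t^3) - 3/5*(5*t^4) - 1/6*(6*t^5)) t := by
    exact (((((hasDerivAt_id t).add ((hasDerivAt_pow 2 t).const_mul (3/2))).add
      ((hasDerivAt_pow 3 t).const_mul (2/3))).sub
      ((hasDerivAt_pow 4 t).const_mul (1/2))).sub
      ((hasDerivAt_pow 5 t).const_mul (3/5))).sub
      ((hasDerivAt_pow 6 t).const_mul (1/6))
  convert h using 1; ring

private lemma antider2 (t : ℝ) :
    HasDerivAt (fun y : ℝ => y + 1/2*y^2 - 1/3*y^3 - 1/4*y^4)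
      ((1 - t) * (1 + t) ^ 2) t := by
  have h : HasDerivAt (fun y : ℝ => y + 1/2*y^2 - 1/3*y^3 - 1/4*y^4)
      (1 + 1/2*(2*t^1) - 1/3*(3*t^2) - 1/4*(4*t^3)) t := by
    exact (((hasDerivAt_id t).add ((hasDerivAt_pow 2 t).const_mul (1/2))).sub
      ((hasDerivAt_pow 3 t).const_mul (1/3))).sub
      ((hasDerivAt_pow 4 t).const_mul (1/4))
  convert h using 1; ring

private lemma int4 (x : ℝ) :
    (∫ t in (0:ℝ)..x, (1 - t) * (1 + t) ^ 4)
      = x + 3/2*x^2 + 2/3*x^3 - 1/2*x^4 - 3/5*x^5 - 1/6*x^6 := by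
  have := intervalIntegral.integral_eq_sub_of_hasDerivAt
    (f := fun y : ℝ => y + 3/2*y^2 + 2/3*y^3 - 1/2*y^4 - 3/5*y^5 - 1/6*y^6)
    (f' := fun t : ℝ => (1 - t) * (1 + t) ^ 4) (a := 0) (b := x)
    (fun t _ => antider4 t)
    ((Continuous.intervalIntegrable (by continuity) 0 x))
  simpa using this

private lemma int2 (x : ℝ) :
    (∫ t in (0:ℝ)..x, (1 - t) * (1 + t) ^ 2)
      = x + 1/2*x^2 - 1/3*x^3 - 1/4*x^4 := by
  have := intervalIntegral.integral_eq_sub_of_hasDerivAt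
    (f := fun y : ℝ => y + 1/2*y^2 - 1/3*y^3 - 1/4*y^4)
    (f' := fun t : ℝ => (1 - t) * (1 + t) ^ 2) (a := 0) (b := x)
    (fun t _ => antider2 t)
    ((Continuous.intervalIntegrable (by continuity) 0 x))
  simpa using this

private lemma numer (x : ℝ) : HasDerivAt
    (fun x : ℝ => (-40/46 : ℝ) * (x + 3/2*x^2 + 2/3*x^3 - 1/2*x^4 - 3/5*x^5 - 1/6*x^6)
        + 8 * (x + 1/2*x^2 - 1/3*x^3 - 1/4*x^4))
    ((-40/46) * ((1 - x) * (1 + x) ^ 4) + 8 * ((1 - x) * (1 + x) ^ 2)) x :=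
  ((antider4 x).const_mul _).add ((antider2 x).const_mul _)

private lemma denom (x : ℝ) : HasDerivAt
    (fun x : ℝ => (-40/46 : ℝ) * (1 + x) ^ 4 + 8 * (1 + x) ^ 2)
    ((-40/46) * (4 * (1 + x) ^ 3) + 8 * (2 * (1 + x))) x := by
  have h1 : HasDerivAt (fun x : ℝ => (1 + x) ^ 4) (4 * (1 + x) ^ 3) x := by
    have := ((hasDerivAt_id x).const_add 1).pow 4
    simp at this; exact this
  have h2 : HasDerivAt (fun x : ℝ => (1 + x) ^ 2) (2 * (1 + x)) x := by
    have := ((hasDerivAt_id x).const_add 1).pow 2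
    simp at this; exact this
  exact (h1.const_mul _).add (h2.const_mul _)

theorem stmt_17 (φ : ℝ → ℝ)
    (hφ : ∀ x, φ x =
      ((-40 / 46) * (∫ t in (0:ℝ)..x, (1 - t) * (1 + t) ^ 4) +
          8 * (∫ t in (0:ℝ)..x, (1 - t) * (1 + t) ^ 2)) /
        ((-40 / 46) * (1 + x) ^ 4 + 8 * (1 + x) ^ 2)) :
    (∀ x ∈ Set.Icc (0:ℝ) 2, 0 < (-40 / 46) * (1 + x) ^ 4 + 8 * (1 + x) ^ 2) ∧
      φ 0 = 0 ∧ φ 2 = 0 ∧ HasDerivAt φ 1 0 ∧ HasDerivAt φ (-1) 2 ∧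
      ∀ x ∈ Set.Ioo (0:ℝ) 2, 0 < φ x := by
  have hφ' : φ = fun x : ℝ =>
      ((-40/46 : ℝ) * (x + 3/2*x^2 + 2/3*x^3 - 1/2*x^4 - 3/5*x^5 - 1/6*x^6)
        + 8 * (x + 1/2*x^2 - 1/3*x^3 - 1/4*x^4)) /
      ((-40/46 : ℝ) * (1 + x) ^ 4 + 8 * (1 + x) ^ 2) := by
    funext x; rw [hφ x, int4 x, int2 x]
  have hD : ∀ x ∈ Set.Icc (0:ℝ) 2, 0 < (-40 / 46 : ℝ) * (1 + x) ^ 4 + 8 * (1 + x) ^ 2 := by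
    rintro x ⟨h0, h2⟩
    nlinarith [sq_nonneg x, sq_nonneg (x - 2), sq_nonneg (x * (x - 2))]
  refine ⟨hD, ?_, ?_, ?_, ?_, ?_⟩
  · rw [hφ']; norm_num
  · rw [hφ']; norm_num
  · rw [hφ']
    have hd0 : ((-40/46 : ℝ) * (1 + (0:ℝ)) ^ 4 + 8 * (1 + (0:ℝ)) ^ 2) ≠ 0 := by norm_num
    have := (numer 0).div (denom 0) hd0
    exact this.congr_deriv (by norm_num)
  · rw [hφ']
    have hd2 : ((-40/46 : ℝ) * (1 + (2:ℝ)) ^ 4 + 8 * (1 + (2:ℝ)) ^ 2) ≠ 0 := by norm_num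
    have := (numer 2).div (denom 2) hd2
    exact this.congr_deriv (by norm_num)
  · rintro x ⟨h0, h2⟩
    rw [hφ']
    apply div_pos
    · nlinarith [mul_pos h0 (sub_pos.2 h2), sq_nonneg x, sq_nonneg (x - 2),
        mul_pos (mul_pos h0 (sub_pos.2 h2)) (mul_pos h0 (sub_pos.2 h2)),
        sq_nonneg (x*(x-2)), sq_nonneg (x^2 - 2*x)]
    · exact hD x ⟨le_of_lt h0, le_of_lt h2⟩
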